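/- Let C be a right triangulated category satisfying Assumption 2.10, D ⊆ Z subcategories with D factor-through-epic and Z extension-closed, such that (Z,Z) is a D-mutation pair. If the restriction T|_Z : Z → TZ of the shift functor is full, then the right triangulated quotient category Z/D is a triangulated category, i.e. the induced shift σ on Z/D is an equivalence. -/

import Mathlib

open CategoryTheory Limits

attribute [local instance] CategoryTheory.Limits.hasBinaryBiproducts_of_finite_biproducts

universe v u

variable (C : Type u) [Category.{v} C]

/-- A sextuple `A ⟶ B ⟶ C ⟶ TA` in a category with an endofunctor `T`. -/
structure RightTriangle (T : C ⥤ C) where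
  obj₁ : C
  obj₂ : C
  obj₃ : C
  mor₁ : obj₁ ⟶ obj₂
  mor₂ : obj₂ ⟶ obj₃
  mor₃ : obj₃ ⟶ T.obj obj₁

variable {C}

/-- An isomorphism of sextuples. -/
def RightTriangle.Iso {T : C ⥤ C} (t t' : RightTriangle C T) : Prop :=
  ∃ (a : t.obj₁ ≅ t'.obj₁) (b : t.obj₂ ≅ t'.obj₂) (c : t.obj₃ ≅ t'.obj₃),
    t.mor₁ ≫ b.hom = a.hom ≫ t'.mor₁ ∧
    t.mor₂ ≫ c.hom = b.hom ≫ t'.mor₂ ∧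
    t.mor₃ ≫ T.map a.hom = c.hom ≫ t'.mor₃

open ZeroObject in
/-- A right triangulated category structure on an additive category `C`
with shift endofunctor `T`, following Assem–Beligiannis–Marmaridis:
axioms TR(0)-TR(5). -/
structure RightTriangulated [Preadditive C] [HasZeroObject C] [HasFiniteBiproducts C]
    (T : C ⥤ C) where
  shift_additive : T.Additive
  dist : Set (RightTriangle C T)
  /-- TR(0): closed under isomorphisms -/
  tr0 : ∀ t ∈ dist, ∀ t', RightTriangle.Iso t t' → t' ∈ dist
  /-- TR(1): `0 ⟶ A ⟶ A ⟶ 0` is a right triangle -/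
  tr1 : ∀ A : C, (⟨0, A, A, 0, 𝟙 A, 0⟩ : RightTriangle C T) ∈ dist
  /-- TR(2): every morphism extends to a right triangle -/
  tr2 : ∀ {A B : C} (f : A ⟶ B), ∃ (Z : C) (g : B ⟶ Z) (h : Z ⟶ T.obj A),
    (⟨A, B, Z, f, g, h⟩ : RightTriangle C T) ∈ dist
  /-- TR(3): rotation -/
  tr3 : ∀ t ∈ dist,
    (⟨t.obj₂, t.obj₃, T.obj t.obj₁, t.mor₂, t.mor₃, -T.map t.mor₁⟩ : RightTriangle C T) ∈ dist
  /-- TR(4): completion of commutative squares to morphisms of right triangles -/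
  tr4 : ∀ t ∈ dist, ∀ t' ∈ dist, ∀ (a : t.obj₁ ⟶ t'.obj₁) (b : t.obj₂ ⟶ t'.obj₂),
    t.mor₁ ≫ b = a ≫ t'.mor₁ →
    ∃ c : t.obj₃ ⟶ t'.obj₃,
      t.mor₂ ≫ c = b ≫ t'.mor₂ ∧ t.mor₃ ≫ T.map a = c ≫ t'.mor₃
  /-- TR(5): the octahedral axiom -/
  tr5 : ∀ {X Y Z U V W : C} (a : X ⟶ Y) (b : Y ⟶ Z) (c : Z ⟶ T.obj X)
    (d : Y ⟶ U) (e : U ⟶ V) (f : V ⟶ T.obj Y) (g : U ⟶ W) (h : W ⟶ T.obj X),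
    (⟨X, Y, Z, a, b, c⟩ : RightTriangle C T) ∈ dist →
    (⟨Y, U, V, d, e, f⟩ : RightTriangle C T) ∈ dist →
    (⟨X, U, W, a ≫ d, g, h⟩ : RightTriangle C T) ∈ dist →
    ∃ (l : Z ⟶ W) (i : W ⟶ V),
      b ≫ l = d ≫ g ∧ l ≫ h = c ∧ g ≫ i = e ∧ i ≫ f = h ≫ T.map a ∧
      (⟨Z, W, V, l, i, f ≫ T.map b⟩ : RightTriangle C T) ∈ dist

/-- Assumption 2.10: the rotation axiom can be reversed. -/
def Assumption210 [Preadditive C] [HasZeroObject C] [HasFiniteBiproducts C]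
    {T : C ⥤ C} (rt : RightTriangulated T) : Prop :=
  ∀ {A B Z : C} (f : A ⟶ B) (g : B ⟶ Z) (h : Z ⟶ T.obj A),
    (⟨B, Z, T.obj A, g, h, -T.map f⟩ : RightTriangle C T) ∈ rt.dist →
    (⟨A, B, Z, f, g, h⟩ : RightTriangle C T) ∈ rt.dist

/-- A morphism factors through an object of `S`. -/
def FactorsThru (S : Set C) {X Y : C} (f : X ⟶ Y) : Prop :=
  ∃ (D : C) (_ : D ∈ S) (u : X ⟶ D) (v : D ⟶ Y), u ≫ v = f

/-- `g : X ⟶ Y` is `S`-epic. -/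
def SEpic (S : Set C) {X Y : C} (g : X ⟶ Y) : Prop :=
  ∀ D ∈ S, ∀ u : D ⟶ Y, ∃ v : D ⟶ X, v ≫ g = u

/-- `f : X ⟶ Y` is `S`-monic. -/
def SMonic (S : Set C) {X Y : C} (f : X ⟶ Y) : Prop :=
  ∀ D ∈ S, ∀ u : X ⟶ D, ∃ v : Y ⟶ D, f ≫ v = u

/-- iterate of an endofunctor. -/
def iterFun (T : C ⥤ C) : ℕ → (C ⥤ C)
  | 0 => 𝟭 C
  | n + 1 => iterFun T n ⋙ T

/-- `S` is factor-through-epic: every `f ∈ [Tⁿ S](TX, TY)` with `n > 0` is of the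
form `T f'` for some `f' ∈ [Tⁿ⁻¹ S](X, Y)`. -/
def FactorThroughEpic (T : C ⥤ C) (S : Set C) : Prop :=
  ∀ (n : ℕ) (X Y : C) (f : T.obj X ⟶ T.obj Y),
    FactorsThru ((iterFun T (n + 1)).obj '' S) f →
    ∃ f' : X ⟶ Y, FactorsThru ((iterFun T n).obj '' S) f' ∧ T.map f' = f

/-- A subcategory (given by a set of objects) closed under isomorphisms,
finite direct sums and direct summands. -/
def IsSubcat [Preadditive C] [HasFiniteBiproducts C] (S : Set C) : Prop :=
  (∀ {X Y : C}, (X ≅ Y) → X ∈ S → Y ∈ S) ∧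
  (∀ {X Y : C}, X ∈ S → Y ∈ S → (X ⊞ Y) ∈ S) ∧
  (∀ {X Y : C} (s : Y ⟶ X) (r : X ⟶ Y), s ≫ r = 𝟙 Y → X ∈ S → Y ∈ S)

section Mutation

variable [Preadditive C] [HasZeroObject C] [HasFiniteBiproducts C]
  {T : C ⥤ C} (rt : RightTriangulated T)

/-- `μ(𝒵; 𝒟)`: objects `X` that lie in `𝒟` or are the left end of a right triangle
`X ⟶ D ⟶ Y ⟶ TX` with `Y ∈ 𝒵`, `D ∈ 𝒟`, the first map a left `𝒟`-approximation and
the second a right `𝒟`-approximation. -/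
def muSet (𝒵 𝒟 : Set C) : Set C :=
  {X | X ∈ 𝒟 ∨ ∃ (D Y : C) (f : X ⟶ D) (g : D ⟶ Y) (h : Y ⟶ T.obj X),
    (⟨X, D, Y, f, g, h⟩ : RightTriangle C T) ∈ rt.dist ∧
    D ∈ 𝒟 ∧ Y ∈ 𝒵 ∧ SMonic 𝒟 f ∧ SEpic 𝒟 g}

/-- `μ⁻¹(𝒳; 𝒟)`: objects `Y` that lie in `𝒟` or are the third term of a right triangle
`X ⟶ D ⟶ Y ⟶ TX` with `X ∈ 𝒳`, `D ∈ 𝒟`, the maps being left/right `𝒟`-approximations. -/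
def muInvSet (𝒳 𝒟 : Set C) : Set C :=
  {Y | Y ∈ 𝒟 ∨ ∃ (X D : C) (f : X ⟶ D) (g : D ⟶ Y) (h : Y ⟶ T.obj X),
    (⟨X, D, Y, f, g, h⟩ : RightTriangle C T) ∈ rt.dist ∧
    X ∈ 𝒳 ∧ D ∈ 𝒟 ∧ SMonic 𝒟 f ∧ SEpic 𝒟 g}

/-- `(𝒳, 𝒴)` is a `𝒟`-mutation pair. -/
def IsMutationPair (𝒳 𝒴 𝒟 : Set C) : Prop :=
  muInvSet rt 𝒳 𝒟 = 𝒴 ∧ muSet rt 𝒴 𝒟 = 𝒳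

/-- `𝒵` is extension-closed. -/
def ExtClosed (𝒵 : Set C) : Prop :=
  ∀ t ∈ rt.dist, t.obj₁ ∈ 𝒵 → t.obj₃ ∈ 𝒵 → t.obj₂ ∈ 𝒵

end Mutation

section Quotient

variable [Preadditive C] (𝒵 𝒟 : Set C)

/-- The ideal relation: two morphisms of the full subcategory on `𝒵` are identified
iff their difference factors through an object of `𝒟`. -/
def stableRel : HomRel (ObjectProperty.FullSubcategory (· ∈ 𝒵)) :=
  fun {X Y} f g =>
    FactorsThru 𝒟 ((f.hom : X.obj ⟶ Y.obj) - (g.hom : X.obj ⟶ Y.obj))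

/-- The quotient category `𝒵/𝒟`. -/
abbrev ZModD := CategoryTheory.Quotient (stableRel 𝒵 𝒟)

/-- The quotient functor `𝒵 ⟶ 𝒵/𝒟`. -/
abbrev zquot : ObjectProperty.FullSubcategory (· ∈ 𝒵) ⥤ ZModD 𝒵 𝒟 :=
  Quotient.functor (stableRel 𝒵 𝒟)

end Quotient

section Helpers

variable {C : Type u} [Category.{v} C] [Preadditive C] [HasZeroObject C]
  [HasFiniteBiproducts C] {T : C ⥤ C} (rt : RightTriangulated T)

open ZeroObject

lemma RT.comp₁₂ (t : RightTriangle C T) (ht : t ∈ rt.dist) : t.mor₁ ≫ t.mor₂ = 0 := by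
  obtain ⟨c, hc, -⟩ :=
    rt.tr4 _ (rt.tr3 _ (rt.tr1 t.obj₁)) t ht (𝟙 t.obj₁) t.mor₁ (by simp)
  simpa using hc.symm

lemma RT.comp₂₃ (t : RightTriangle C T) (ht : t ∈ rt.dist) : t.mor₂ ≫ t.mor₃ = 0 :=
  RT.comp₁₂ rt _ (rt.tr3 _ ht)

lemma RT.wcok (t : RightTriangle C T) (ht : t ∈ rt.dist) {W : C} (u : t.obj₂ ⟶ W)
    (hu : t.mor₁ ≫ u = 0) : ∃ v : t.obj₃ ⟶ W, t.mor₂ ≫ v = u := by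
  obtain ⟨c, hc, -⟩ := rt.tr4 t ht _ (rt.tr1 W) 0 u (by simpa using hu)
  exact ⟨c, by simpa using hc⟩

lemma RT.Tfaithful (h210 : Assumption210 rt) {W V : C} (δ : W ⟶ V)
    (hδ : T.map δ = 0) : δ = 0 := by
  haveI := rt.shift_additive
  obtain ⟨U, g, h, htr⟩ := rt.tr2 (T := T) δ
  have h1 : (⟨V, U, T.obj W, g, h, -T.map (0 : W ⟶ V)⟩ : RightTriangle C T) ∈ rt.dist := by
    have e : (⟨V, U, T.obj W, g, h, -T.map (0 : W ⟶ V)⟩ : RightTriangle C T)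
        = ⟨V, U, T.obj W, g, h, -T.map δ⟩ := by rw [hδ, Functor.map_zero]
    rw [e]
    exact rt.tr3 _ htr
  have h2 := h210 (0 : W ⟶ V) g h h1
  obtain ⟨r, hr⟩ := RT.wcok rt _ h2 (𝟙 V) (by simp)
  have hr' : g ≫ r = 𝟙 V := hr
  have h3 : δ ≫ g = 0 := RT.comp₁₂ rt _ htr
  calc δ = δ ≫ (g ≫ r) := by rw [hr', Category.comp_id]
    _ = (δ ≫ g) ≫ r := by rw [Category.assoc]
    _ = 0 := by rw [h3, Limits.zero_comp]

lemma RT.factors_of_T (h210 : Assumption210 rt) {𝒟 : Set C}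
    (hfte : FactorThroughEpic T 𝒟) {X Y : C} (f : X ⟶ Y)
    (hf : FactorsThru (T.obj '' 𝒟) (T.map f)) : FactorsThru 𝒟 f := by
  haveI := rt.shift_additive
  obtain ⟨D', hD', u, v, huv⟩ := hf
  obtain ⟨D, hD, rfl⟩ := hD'
  obtain ⟨f', hf', hTf⟩ := hfte 0 X Y (T.map f) ⟨T.obj D, ⟨D, hD, by rfl⟩, u, v, huv⟩
  have hff : f' = f := by
    have h0 : T.map (f' - f) = 0 := by rw [Functor.map_sub, hTf, sub_self]
    have := RT.Tfaithful rt h210 _ h0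
    rwa [sub_eq_zero] at this
  subst hff
  obtain ⟨E', hE', u', v', h'⟩ := hf'
  obtain ⟨E, hE, rfl⟩ := hE'
  exact ⟨E, hE, u', v', h'⟩

lemma RT.key (h210 : Assumption210 rt) {𝒟 : Set C} (hfte : FactorThroughEpic T 𝒟)
    (t : RightTriangle C T) (ht : t ∈ rt.dist) (hD2 : t.obj₂ ∈ 𝒟) {W : C}
    (w : W ⟶ t.obj₃) (hw : w ≫ t.mor₃ = 0) : FactorsThru 𝒟 w := by
  haveI := rt.shift_additive
  have ht2 : (⟨t.obj₃, T.obj t.obj₁, T.obj t.obj₂, t.mor₃, -T.map t.mor₁,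
      -T.map t.mor₂⟩ : RightTriangle C T) ∈ rt.dist := rt.tr3 _ (rt.tr3 _ ht)
  have ht0 : (⟨W, T.obj (0 : C), T.obj W, 0, -T.map (0 : (0 : C) ⟶ W),
      -T.map (𝟙 W)⟩ : RightTriangle C T) ∈ rt.dist := rt.tr3 _ (rt.tr3 _ (rt.tr1 W))
  obtain ⟨c, -, hc⟩ := rt.tr4 _ ht0 _ ht2 w (0 : T.obj (0 : C) ⟶ T.obj t.obj₁)
    (by simp [hw])
  have hc' : T.map w = c ≫ T.map t.mor₂ := by
    have h : (-T.map (𝟙 W)) ≫ T.map w = c ≫ (-T.map t.mor₂) := hc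
    simpa using h
  exact RT.factors_of_T rt h210 hfte w ⟨T.obj t.obj₂, ⟨t.obj₂, hD2, rfl⟩, c,
    T.map t.mor₂, hc'.symm⟩

lemma RT.key2 (h210 : Assumption210 rt) {𝒟 : Set C} (hfte : FactorThroughEpic T 𝒟)
    (t : RightTriangle C T) (ht : t ∈ rt.dist) (hD2 : t.obj₂ ∈ 𝒟) {V : C}
    (δ : t.obj₁ ⟶ V) (hδ : t.mor₃ ≫ T.map δ = 0) : FactorsThru 𝒟 δ := by
  haveI := rt.shift_additive
  have ht2 : (⟨t.obj₃, T.obj t.obj₁, T.obj t.obj₂, t.mor₃, -T.map t.mor₁,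
      -T.map t.mor₂⟩ : RightTriangle C T) ∈ rt.dist := rt.tr3 _ (rt.tr3 _ ht)
  obtain ⟨v, hv⟩ := RT.wcok rt _ ht2 (T.map δ) hδ
  have hv' : T.map δ = T.map t.mor₁ ≫ (-v) := by
    have h : (-T.map t.mor₁) ≫ v = T.map δ := hv
    rw [← h]; simp
  exact RT.factors_of_T rt h210 hfte δ ⟨T.obj t.obj₂, ⟨t.obj₂, hD2, rfl⟩,
    T.map t.mor₁, -v, hv'.symm⟩

end Helpers
/-- Theorem 3.11: if `(𝒵, 𝒵)` is a `𝒟`-mutation pair, `𝒟` is factor-through-epic,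
`𝒵` is extension-closed and the restriction of the shift `T` to `𝒵` is full, then
the induced shift `σ` on the right triangulated quotient `𝒵/𝒟` is an equivalence,
i.e. `𝒵/𝒟` is a triangulated category. -/
theorem sigma_isEquivalence {C : Type u} [Category.{v} C] [Preadditive C]
    [HasZeroObject C] [HasFiniteBiproducts C] {T : C ⥤ C} (rt : RightTriangulated T)
    (h210 : Assumption210 rt)
    (𝒟 𝒵 : Set C) (hsub𝒟 : IsSubcat 𝒟) (hsub𝒵 : IsSubcat 𝒵) (h𝒟𝒵 : 𝒟 ⊆ 𝒵)
    (hfte : FactorThroughEpic T 𝒟) (hext : ExtClosed rt 𝒵)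
    (hmut : IsMutationPair rt 𝒵 𝒵 𝒟)
    (hTfull : ∀ X ∈ 𝒵, ∀ Y ∈ 𝒵, ∀ g : T.obj X ⟶ T.obj Y, ∃ f : X ⟶ Y, T.map f = g)
    (DM σO : C → C) (α : ∀ M : C, M ⟶ DM M) (β : ∀ M : C, DM M ⟶ σO M)
    (γ : ∀ M : C, σO M ⟶ T.obj M)
    (hDM : ∀ M ∈ 𝒵, DM M ∈ 𝒟) (hσ : ∀ M ∈ 𝒵, σO M ∈ 𝒵)
    (htri : ∀ M ∈ 𝒵, (⟨M, DM M, σO M, α M, β M, γ M⟩ : RightTriangle C T) ∈ rt.dist)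
    (hα : ∀ M ∈ 𝒵, SMonic 𝒟 (α M)) (hβ : ∀ M ∈ 𝒵, SEpic 𝒟 (β M)) :
    ∀ (σfun : ZModD 𝒵 𝒟 ⥤ ZModD 𝒵 𝒟)
      (hobj : ∀ (M : C) (hM : M ∈ 𝒵),
        σfun.obj ((zquot 𝒵 𝒟).obj ⟨M, hM⟩) = (zquot 𝒵 𝒟).obj ⟨σO M, hσ M hM⟩),
      (∀ (M N : C) (hM : M ∈ 𝒵) (hN : N ∈ 𝒵) (μ : M ⟶ N) (g : DM M ⟶ DM N)
          (μ' : σO M ⟶ σO N),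
          α M ≫ g = μ ≫ α N → β M ≫ μ' = g ≫ β N → γ M ≫ T.map μ = μ' ≫ γ N →
          σfun.map ((zquot 𝒵 𝒟).map (ObjectProperty.homMk μ : (⟨M, hM⟩ : ObjectProperty.FullSubcategory (· ∈ 𝒵)) ⟶ ⟨N, hN⟩))
            = eqToHom (hobj M hM) ≫
              (zquot 𝒵 𝒟).map (ObjectProperty.homMk μ' : (⟨σO M, hσ M hM⟩ : ObjectProperty.FullSubcategory (· ∈ 𝒵)) ⟶ ⟨σO N, hσ N hN⟩)
              ≫ eqToHom (hobj N hN).symm) →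
      σfun.IsEquivalence := by

  intro σfun hobj hmap
  haveI := rt.shift_additive
  -- Congruence instance for the ideal relation
  haveI hcong : Congruence (stableRel 𝒵 𝒟) := by
    refine Congruence.mk (toIsStableUnderPrecomp := ⟨?_⟩) (toIsStableUnderPostcomp := ⟨?_⟩) ?_
    rotate_left 2
    · intro X Y
      constructor
      · intro f
        exact ⟨DM X.obj, hDM X.obj X.property, 0, 0, by simp⟩
      · rintro f g ⟨D, hD, u, v, huv⟩
        exact ⟨D, hD, -u, v, by rw [Preadditive.neg_comp, huv, neg_sub]⟩
      · rintro f g h ⟨D₁, hD₁, u₁, v₁, h₁⟩ ⟨D₂, hD₂, u₂, v₂, h₂⟩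
        refine ⟨D₁ ⊞ D₂, hsub𝒟.2.1 hD₁ hD₂, biprod.lift u₁ u₂, biprod.desc v₁ v₂, ?_⟩
        rw [biprod.lift_desc, h₁, h₂]; abel
    · rintro X Y Z f g g' ⟨D, hD, u, v, huv⟩
      have hh : (f.hom ≫ u) ≫ v = f.hom ≫ g.hom - f.hom ≫ g'.hom := by
        rw [Category.assoc, huv, Preadditive.comp_sub]
      exact ⟨D, hD, f.hom ≫ u, v, hh⟩
    · rintro X Y Z f f' g ⟨D, hD, u, v, huv⟩
      have hh : u ≫ (v ≫ g.hom) = f.hom ≫ g.hom - f'.hom ≫ g.hom := by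
        rw [← Category.assoc, huv, Preadditive.sub_comp]
      exact ⟨D, hD, u, v ≫ g.hom, hh⟩
  have qeq : ∀ {X Y : ObjectProperty.FullSubcategory (· ∈ 𝒵)} (f g : X ⟶ Y),
      FactorsThru 𝒟 (f.hom - g.hom) →
      (zquot 𝒵 𝒟).map f = (zquot 𝒵 𝒟).map g :=
    fun f g h => CategoryTheory.Quotient.sound (stableRel 𝒵 𝒟) h
  have qeq' : ∀ {X Y : ObjectProperty.FullSubcategory (· ∈ 𝒵)} (f g : X ⟶ Y),
      (zquot 𝒵 𝒟).map f = (zquot 𝒵 𝒟).map g →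
      FactorsThru 𝒟 (f.hom - g.hom) :=
    fun f g h => (Quotient.functor_map_eq_iff _ _ _).mp h
  have hqcomp : ∀ {X Y Z : ObjectProperty.FullSubcategory (· ∈ 𝒵)} (a : X.obj ⟶ Y.obj)
      (b : Y.obj ⟶ Z.obj),
      (zquot 𝒵 𝒟).map (show X ⟶ Z from ObjectProperty.homMk (a ≫ b))
        = (zquot 𝒵 𝒟).map (show X ⟶ Y from ObjectProperty.homMk a) ≫ (zquot 𝒵 𝒟).map (show Y ⟶ Z from ObjectProperty.homMk b) :=
    fun a b => (zquot 𝒵 𝒟).map_comp (ObjectProperty.homMk a) (ObjectProperty.homMk b)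
  -- the canonical lift of a morphism to the shifted objects
  have lift : ∀ (M N : C) (hM : M ∈ 𝒵) (hN : N ∈ 𝒵) (μ : M ⟶ N),
      ∃ μ' : σO M ⟶ σO N,
        γ M ≫ T.map μ = μ' ≫ γ N ∧
        σfun.map ((zquot 𝒵 𝒟).map (ObjectProperty.homMk μ : (⟨M, hM⟩ : ObjectProperty.FullSubcategory (· ∈ 𝒵)) ⟶ ⟨N, hN⟩))
          = eqToHom (hobj M hM) ≫
            (zquot 𝒵 𝒟).map
              (ObjectProperty.homMk μ' : (⟨σO M, hσ M hM⟩ : ObjectProperty.FullSubcategory (· ∈ 𝒵)) ⟶ ⟨σO N, hσ N hN⟩)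
            ≫ eqToHom (hobj N hN).symm := by
    intro M N hM hN μ
    obtain ⟨g, hg⟩ := hα M hM (DM N) (hDM N hN) (μ ≫ α N)
    obtain ⟨μ', h1, h2⟩ := rt.tr4 _ (htri M hM) _ (htri N hN) μ g hg
    have h1' : β M ≫ μ' = g ≫ β N := h1
    have h2' : γ M ≫ T.map μ = μ' ≫ γ N := h2
    exact ⟨μ', h2', hmap M N hM hN μ g μ' hg h1' h2'⟩
  have hβγ : ∀ (N : C) (hN : N ∈ 𝒵), β N ≫ γ N = 0 :=
    fun N hN => RT.comp₂₃ rt _ (htri N hN)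
  -- faithful
  have hfaith : σfun.Faithful := by
    refine ⟨fun {X Y} {φ ψ} hfψ => ?_⟩
    obtain ⟨⟨M, hM⟩⟩ := X
    obtain ⟨⟨N, hN⟩⟩ := Y
    change (zquot 𝒵 𝒟).obj ⟨M, hM⟩ ⟶ (zquot 𝒵 𝒟).obj ⟨N, hN⟩ at φ ψ
    obtain ⟨μ, hμ⟩ := (zquot 𝒵 𝒟).map_surjective (X := ⟨M, hM⟩) (Y := ⟨N, hN⟩) φ
    obtain ⟨ν, hν⟩ := (zquot 𝒵 𝒟).map_surjective (X := ⟨M, hM⟩) (Y := ⟨N, hN⟩) ψ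
    obtain ⟨μ, rfl⟩ := ObjectProperty.homMk_surjective μ
    obtain ⟨ν, rfl⟩ := ObjectProperty.homMk_surjective ν
    obtain ⟨μ', hμ'γ, hμ'map⟩ := lift M N hM hN μ
    obtain ⟨ν', hν'γ, hν'map⟩ := lift M N hM hN ν
    rw [← hμ, ← hν] at hfψ ⊢
    rw [hμ'map, hν'map] at hfψ
    rw [cancel_epi, cancel_mono] at hfψ
    obtain ⟨D₀, hD₀, u, v, huv⟩ := qeq' _ _ hfψ
    simp only [ObjectProperty.homMk_hom] at huv
    obtain ⟨v₁, hv₁⟩ := hβ N hN D₀ hD₀ v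
    have hvγ : v ≫ γ N = 0 := by
      rw [← hv₁, Category.assoc, hβγ N hN, Limits.comp_zero]
    have hkey : γ M ≫ T.map ((μ : M ⟶ N) - ν) = 0 := by
      rw [Functor.map_sub, Preadditive.comp_sub, hμ'γ, hν'γ, ← Preadditive.sub_comp, ← huv, Category.assoc,
        hvγ, Limits.comp_zero]
    have hfac : FactorsThru 𝒟 ((μ : M ⟶ N) - ν) :=
      RT.key2 rt h210 hfte _ (htri M hM) (hDM M hM) _ hkey
    exact qeq _ _ hfac
  -- full
  have hfull : σfun.Full := by
    refine ⟨fun {X Y} ω => ?_⟩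
    obtain ⟨⟨M, hM⟩⟩ := X
    obtain ⟨⟨N, hN⟩⟩ := Y
    change σfun.obj ((zquot 𝒵 𝒟).obj ⟨M, hM⟩) ⟶ σfun.obj ((zquot 𝒵 𝒟).obj ⟨N, hN⟩) at ω
    obtain ⟨ε, hε⟩ := (zquot 𝒵 𝒟).map_surjective (X := ⟨σO M, hσ M hM⟩)
      (Y := ⟨σO N, hσ N hN⟩)
      (eqToHom (hobj M hM).symm ≫ ω ≫ eqToHom (hobj N hN))
    obtain ⟨ε, rfl⟩ := ObjectProperty.homMk_surjective ε
    obtain ⟨a₀, ha₀⟩ := hβ N hN (DM M) (hDM M hM) (β M ≫ ε)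
    obtain ⟨c, hc1, -⟩ := rt.tr4 _ (rt.tr3 _ (htri M hM)) _ (rt.tr3 _ (htri N hN))
      a₀ ε ha₀.symm
    have hc1' : γ M ≫ c = (show σO M ⟶ σO N from ε) ≫ γ N := hc1
    obtain ⟨μ, hμT⟩ := hTfull M hM N hN c
    obtain ⟨μ', hμ'γ, hμ'map⟩ := lift M N hM hN μ
    have hqε : (zquot 𝒵 𝒟).map
        (ObjectProperty.homMk μ' : (⟨σO M, hσ M hM⟩ : ObjectProperty.FullSubcategory (· ∈ 𝒵)) ⟶ ⟨σO N, hσ N hN⟩)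
        = (zquot 𝒵 𝒟).map (ObjectProperty.homMk ε) := by
      apply qeq
      apply RT.key rt h210 hfte _ (htri N hN) (hDM N hN)
      simp only [ObjectProperty.homMk_hom]
      rw [Preadditive.sub_comp, ← hμ'γ, hμT, hc1', sub_self]
    refine ⟨(zquot 𝒵 𝒟).map (ObjectProperty.homMk μ : (⟨M, hM⟩ : ObjectProperty.FullSubcategory (· ∈ 𝒵)) ⟶ ⟨N, hN⟩), ?_⟩
    rw [hμ'map, hqε, hε]
    simp
  -- essentially surjective
  have hess : σfun.EssSurj := by
    refine ⟨fun Y => ?_⟩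
    obtain ⟨⟨M, hM⟩⟩ := Y
    have hM' : M ∈ muInvSet rt 𝒵 𝒟 := by rw [hmut.1]; exact hM
    rcases hM' with hMD | ⟨N, D, f, g, h, htr, hN, hD, hmono, hepi⟩
    · -- M ∈ 𝒟 : both M and σO M become zero objects in the quotient
      have hid1 : (zquot 𝒵 𝒟).map (𝟙 (⟨M, hM⟩ : ObjectProperty.FullSubcategory (· ∈ 𝒵)))
          = (zquot 𝒵 𝒟).map
            (show (⟨M, hM⟩ : ObjectProperty.FullSubcategory (· ∈ 𝒵)) ⟶ ⟨M, hM⟩ from ObjectProperty.homMk (0 : M ⟶ M)) := by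
        apply qeq
        refine ⟨M, hMD, 𝟙 M, 𝟙 M, ?_⟩
        show 𝟙 M ≫ 𝟙 M = 𝟙 M - 0
        simp
      have h2 := hmap M M hM hM 0 0 0 (by simp) (by simp) (by simp)
      have h3 : 𝟙 (σfun.obj ((zquot 𝒵 𝒟).obj ⟨M, hM⟩))
          = eqToHom (hobj M hM) ≫ (zquot 𝒵 𝒟).map
              (show (⟨σO M, hσ M hM⟩ : ObjectProperty.FullSubcategory (· ∈ 𝒵)) ⟶ ⟨σO M, hσ M hM⟩ from ObjectProperty.homMk
                (0 : σO M ⟶ σO M)) ≫ eqToHom (hobj M hM).symm := by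
        rw [← h2, ← hid1, CategoryTheory.Functor.map_id, CategoryTheory.Functor.map_id]
      have h4 : (zquot 𝒵 𝒟).map
          (show (⟨σO M, hσ M hM⟩ : ObjectProperty.FullSubcategory (· ∈ 𝒵)) ⟶ ⟨σO M, hσ M hM⟩ from ObjectProperty.homMk
            (0 : σO M ⟶ σO M)) = 𝟙 ((zquot 𝒵 𝒟).obj ⟨σO M, hσ M hM⟩) := by
        have h5 := h3.symm
        calc (zquot 𝒵 𝒟).map (show (⟨σO M, hσ M hM⟩ : ObjectProperty.FullSubcategory (· ∈ 𝒵)) ⟶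
              ⟨σO M, hσ M hM⟩ from ObjectProperty.homMk (0 : σO M ⟶ σO M))
            = eqToHom (hobj M hM).symm ≫ (eqToHom (hobj M hM) ≫ (zquot 𝒵 𝒟).map
              (show (⟨σO M, hσ M hM⟩ : ObjectProperty.FullSubcategory (· ∈ 𝒵)) ⟶ ⟨σO M, hσ M hM⟩ from ObjectProperty.homMk
                (0 : σO M ⟶ σO M)) ≫ eqToHom (hobj M hM).symm) ≫ eqToHom (hobj M hM) := by
              simp
          _ = eqToHom (hobj M hM).symm ≫ 𝟙 _ ≫ eqToHom (hobj M hM) := by rw [h5]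
          _ = 𝟙 _ := by simp
      have h6 : (zquot 𝒵 𝒟).map
          (show (⟨M, hM⟩ : ObjectProperty.FullSubcategory (· ∈ 𝒵)) ⟶ ⟨M, hM⟩ from ObjectProperty.homMk (0 : M ⟶ M))
          = 𝟙 ((zquot 𝒵 𝒟).obj ⟨M, hM⟩) := by
        rw [← hid1, CategoryTheory.Functor.map_id]
      refine ⟨(zquot 𝒵 𝒟).obj ⟨M, hM⟩, ⟨?_⟩⟩
      refine ⟨eqToHom (hobj M hM) ≫ (zquot 𝒵 𝒟).map
          (show (⟨σO M, hσ M hM⟩ : ObjectProperty.FullSubcategory (· ∈ 𝒵)) ⟶ ⟨M, hM⟩ from ObjectProperty.homMk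
            (0 : σO M ⟶ M)),
        (zquot 𝒵 𝒟).map (show (⟨M, hM⟩ : ObjectProperty.FullSubcategory (· ∈ 𝒵)) ⟶ ⟨σO M, hσ M hM⟩ from ObjectProperty.homMk
          (0 : M ⟶ σO M)) ≫ eqToHom (hobj M hM).symm, ?_, ?_⟩
      · have hcmp : (zquot 𝒵 𝒟).map
            (show (⟨σO M, hσ M hM⟩ : ObjectProperty.FullSubcategory (· ∈ 𝒵)) ⟶ ⟨M, hM⟩ from ObjectProperty.homMk
              (0 : σO M ⟶ M)) ≫ (zquot 𝒵 𝒟).map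
            (show (⟨M, hM⟩ : ObjectProperty.FullSubcategory (· ∈ 𝒵)) ⟶ ⟨σO M, hσ M hM⟩ from ObjectProperty.homMk
              (0 : M ⟶ σO M)) = 𝟙 ((zquot 𝒵 𝒟).obj ⟨σO M, hσ M hM⟩) := by
          rw [← Functor.map_comp]
          have e1 : (zquot 𝒵 𝒟).map ((show (⟨σO M, hσ M hM⟩ : ObjectProperty.FullSubcategory (· ∈ 𝒵)) ⟶
                ⟨M, hM⟩ from ObjectProperty.homMk (0 : σO M ⟶ M)) ≫ (show (⟨M, hM⟩ : ObjectProperty.FullSubcategory (· ∈ 𝒵)) ⟶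
                ⟨σO M, hσ M hM⟩ from ObjectProperty.homMk (0 : M ⟶ σO M)))
              = (zquot 𝒵 𝒟).map (show (⟨σO M, hσ M hM⟩ : ObjectProperty.FullSubcategory (· ∈ 𝒵)) ⟶
                ⟨σO M, hσ M hM⟩ from ObjectProperty.homMk (0 : σO M ⟶ σO M)) := by
            apply qeq
            refine ⟨M, hMD, 0, 0, ?_⟩
            show (0 : σO M ⟶ M) ≫ (0 : M ⟶ σO M)
              = (0 : σO M ⟶ M) ≫ (0 : M ⟶ σO M) - (0 : σO M ⟶ σO M)
            simp
          rw [e1, h4]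
        simp only [Category.assoc]
        slice_lhs 2 3 => rw [hcmp]
        simp
      · have hcmp : (zquot 𝒵 𝒟).map
            (show (⟨M, hM⟩ : ObjectProperty.FullSubcategory (· ∈ 𝒵)) ⟶ ⟨σO M, hσ M hM⟩ from ObjectProperty.homMk
              (0 : M ⟶ σO M)) ≫ (zquot 𝒵 𝒟).map
            (show (⟨σO M, hσ M hM⟩ : ObjectProperty.FullSubcategory (· ∈ 𝒵)) ⟶ ⟨M, hM⟩ from ObjectProperty.homMk
              (0 : σO M ⟶ M)) = 𝟙 ((zquot 𝒵 𝒟).obj ⟨M, hM⟩) := by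
          rw [← Functor.map_comp]
          have e1 : (zquot 𝒵 𝒟).map ((show (⟨M, hM⟩ : ObjectProperty.FullSubcategory (· ∈ 𝒵)) ⟶
                ⟨σO M, hσ M hM⟩ from ObjectProperty.homMk (0 : M ⟶ σO M)) ≫
                (show (⟨σO M, hσ M hM⟩ : ObjectProperty.FullSubcategory (· ∈ 𝒵)) ⟶ ⟨M, hM⟩ from ObjectProperty.homMk
                (0 : σO M ⟶ M)))
              = (zquot 𝒵 𝒟).map (show (⟨M, hM⟩ : ObjectProperty.FullSubcategory (· ∈ 𝒵)) ⟶ ⟨M, hM⟩ from ObjectProperty.homMk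
                (0 : M ⟶ M)) := by
            apply qeq
            refine ⟨M, hMD, 0, 0, ?_⟩
            show (0 : M ⟶ M) ≫ (0 : M ⟶ M)
              = (0 : M ⟶ σO M) ≫ (0 : σO M ⟶ M) - (0 : M ⟶ M)
            simp
          rw [e1, h6]
        simp only [Category.assoc]
        slice_lhs 2 3 => rw [eqToHom_trans]
        simp only [eqToHom_refl, Category.id_comp, Category.comp_id]
        exact hcmp
    · -- triangle ⟨N, D, M, f, g, h⟩ with N ∈ 𝒵, D ∈ 𝒟
      obtain ⟨φ, hφ⟩ := hα N hN D hD f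
      obtain ⟨c, hc1, hc2⟩ := rt.tr4 _ (htri N hN) _ htr (𝟙 N) φ (by simpa using hφ)
      change σO N ⟶ M at c
      have hc2x : c ≫ h = γ N := by
        have hx : γ N ≫ T.map (𝟙 N) = c ≫ h := hc2
        simpa using hx.symm
      obtain ⟨ψ, hψ⟩ := hmono (DM N) (hDM N hN) (α N)
      obtain ⟨c2, hc3, hc4⟩ := rt.tr4 _ htr _ (htri N hN) (𝟙 N) ψ (by simpa using hψ)
      change M ⟶ σO N at c2
      have hc4x : c2 ≫ γ N = h := by
        have hx : h ≫ T.map (𝟙 N) = c2 ≫ γ N := hc4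
        simpa using hx.symm
      refine ⟨(zquot 𝒵 𝒟).obj ⟨N, hN⟩, ⟨?_⟩⟩
      refine ⟨eqToHom (hobj N hN) ≫ (zquot 𝒵 𝒟).map
          (show (⟨σO N, hσ N hN⟩ : ObjectProperty.FullSubcategory (· ∈ 𝒵)) ⟶ ⟨M, hM⟩ from ObjectProperty.homMk c),
        (zquot 𝒵 𝒟).map (show (⟨M, hM⟩ : ObjectProperty.FullSubcategory (· ∈ 𝒵)) ⟶ ⟨σO N, hσ N hN⟩ from ObjectProperty.homMk
          c2) ≫ eqToHom (hobj N hN).symm, ?_, ?_⟩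
      · have hcmp : (zquot 𝒵 𝒟).map
            (show (⟨σO N, hσ N hN⟩ : ObjectProperty.FullSubcategory (· ∈ 𝒵)) ⟶ ⟨M, hM⟩ from ObjectProperty.homMk c)
            ≫ (zquot 𝒵 𝒟).map
            (show (⟨M, hM⟩ : ObjectProperty.FullSubcategory (· ∈ 𝒵)) ⟶ ⟨σO N, hσ N hN⟩ from ObjectProperty.homMk c2)
            = 𝟙 ((zquot 𝒵 𝒟).obj ⟨σO N, hσ N hN⟩) := by
          rw [← Functor.map_comp]
          have e1 : (zquot 𝒵 𝒟).map ((show (⟨σO N, hσ N hN⟩ : ObjectProperty.FullSubcategory (· ∈ 𝒵)) ⟶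
                ⟨M, hM⟩ from ObjectProperty.homMk c) ≫ (show (⟨M, hM⟩ : ObjectProperty.FullSubcategory (· ∈ 𝒵)) ⟶
                ⟨σO N, hσ N hN⟩ from ObjectProperty.homMk c2))
              = (zquot 𝒵 𝒟).map (𝟙 (⟨σO N, hσ N hN⟩ : ObjectProperty.FullSubcategory (· ∈ 𝒵))) := by
            apply qeq
            apply RT.key rt h210 hfte _ (htri N hN) (hDM N hN)
            show (c ≫ c2 - 𝟙 (σO N)) ≫ γ N = 0
            rw [Preadditive.sub_comp, Category.assoc, hc4x, hc2x, Category.id_comp,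
              sub_self]
          rw [e1, CategoryTheory.Functor.map_id]
        simp only [Category.assoc]
        slice_lhs 2 3 => rw [hcmp]
        simp
      · have hcmp : (zquot 𝒵 𝒟).map
            (show (⟨M, hM⟩ : ObjectProperty.FullSubcategory (· ∈ 𝒵)) ⟶ ⟨σO N, hσ N hN⟩ from ObjectProperty.homMk c2)
            ≫ (zquot 𝒵 𝒟).map
            (show (⟨σO N, hσ N hN⟩ : ObjectProperty.FullSubcategory (· ∈ 𝒵)) ⟶ ⟨M, hM⟩ from ObjectProperty.homMk c)
            = 𝟙 ((zquot 𝒵 𝒟).obj ⟨M, hM⟩) := by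
          rw [← Functor.map_comp]
          have e1 : (zquot 𝒵 𝒟).map ((show (⟨M, hM⟩ : ObjectProperty.FullSubcategory (· ∈ 𝒵)) ⟶
                ⟨σO N, hσ N hN⟩ from ObjectProperty.homMk c2) ≫
                (show (⟨σO N, hσ N hN⟩ : ObjectProperty.FullSubcategory (· ∈ 𝒵)) ⟶ ⟨M, hM⟩ from ObjectProperty.homMk c))
              = (zquot 𝒵 𝒟).map (𝟙 (⟨M, hM⟩ : ObjectProperty.FullSubcategory (· ∈ 𝒵))) := by
            apply qeq
            apply RT.key rt h210 hfte _ htr hD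
            show (c2 ≫ c - 𝟙 M) ≫ h = 0
            rw [Preadditive.sub_comp, Category.assoc, hc2x, hc4x, Category.id_comp,
              sub_self]
          rw [e1, CategoryTheory.Functor.map_id]
        simp only [Category.assoc]
        slice_lhs 2 3 => rw [eqToHom_trans]
        simp only [eqToHom_refl, Category.id_comp, Category.comp_id]
        exact hcmp
  exact { faithful := hfaith, full := hfull, essSurj := hess }
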